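/- Let l ∈ {1, 3} and d = 3 + l, and let M = {M_1, M_2, M_3} ∪ {N_1, …, N_l} be a 1-factorization of the hypercube Q_d such that M_i ∪ N_j is a Hamilton cycle for every i ∈ {1, 2, 3} and j ∈ {1, …, l}. Then sign(M) = −1. -/

import Mathlib

open SimpleGraph

/-- The hypercube graph `Q_d`: vertices are subsets of `{1,…,d}`, two subsets adjacent
iff they differ in exactly one element. -/
def cube (d : ℕ) : SimpleGraph (Finset (Fin d)) where
  Adj u v := (symmDiff u v).card = 1
  symm := ⟨fun u v h => by rwa [symmDiff_comm]⟩
  loopless := ⟨fun u h => by simp [symmDiff_self] at h⟩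

/-- `M` is a perfect matching of `G` (as a set of edges): `M` consists of edges of `G`
and every vertex lies in a unique edge of `M`. -/
def IsPM {V : Type*} (G : SimpleGraph V) (M : Set (Sym2 V)) : Prop :=
  M ⊆ G.edgeSet ∧ ∀ v : V, ∃! e, e ∈ M ∧ v ∈ e

/-- `M` is a 1-factorization of `G`: a partition of the edge set of `G` into
perfect matchings. -/
def IsFactorization {V : Type*} {ι : Type*} (G : SimpleGraph V) (M : ι → Set (Sym2 V)) : Prop :=
  (∀ i, IsPM G (M i)) ∧ (∀ i j, i ≠ j → Disjoint (M i) (M j)) ∧ (⋃ i, M i) = G.edgeSet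

/-- The edge set `E` forms a Hamilton cycle: there is a Hamiltonian cycle in the graph
with edge set `E` which uses every edge of `E`. -/
def IsHamCycleSet {V : Type*} [DecidableEq V] (E : Set (Sym2 V)) : Prop :=
  ∃ (v : V) (w : (SimpleGraph.fromEdgeSet E).Walk v v),
    w.IsHamiltonianCycle ∧ ∀ e ∈ E, e ∈ w.edges

/-- The even vertices of `Q_d`. -/
abbrev EvenVertex (d : ℕ) := {v : Finset (Fin d) // Even v.card}

/-- The odd vertices of `Q_d`. -/
abbrev OddVertex (d : ℕ) := {v : Finset (Fin d) // ¬ Even v.card}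

/-- The bijection `f` from the odd vertices to the even vertices represents the perfect
matching `M`: it sends every odd vertex to its partner in `M`. -/
def Represents {d : ℕ} (M : Set (Sym2 (Finset (Fin d)))) (f : OddVertex d ≃ EvenVertex d) : Prop :=
  ∀ x : OddVertex d, s(x.val, (f x).val) ∈ M

/-- The sign of a 1-factorization, given as the family of bijections (odd → even)
representing its matchings: the product over all pairs `i < j` of the signs of the
permutations `M_i ∘ M_j⁻¹` of the even vertices. -/
noncomputable def factorizationSign {d : ℕ} (f : Fin d → (OddVertex d ≃ EvenVertex d)) : ℤˣ :=
  ∏ p ∈ Finset.univ.filter (fun p : Fin d × Fin d => p.1 < p.2),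
    Equiv.Perm.sign ((f p.2).symm.trans (f p.1))

lemma symmDiff_card_key {d : ℕ} (u v : Finset (Fin d)) :
    u.card + v.card = (symmDiff u v).card + 2 * (u ∩ v).card := by
  have h1 : symmDiff u v = (u \ v) ∪ (v \ u) := by
    rw [symmDiff_def]; rfl
  have h2 : ((u \ v) ∪ (v \ u)).card = (u \ v).card + (v \ u).card :=
    Finset.card_union_of_disjoint (disjoint_sdiff_sdiff)
  have h3 := Finset.card_sdiff_add_card_inter u v
  have h4 := Finset.card_sdiff_add_card_inter v u
  rw [Finset.inter_comm] at h4
  rw [h1, h2]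
  omega

lemma cube_adj_parity {d : ℕ} {u v : Finset (Fin d)} (h : (cube d).Adj u v) :
    Even u.card ↔ ¬ Even v.card := by
  have h1 : (symmDiff u v).card = 1 := h
  have h2 := symmDiff_card_key u v
  rw [Nat.even_iff, Nat.even_iff]
  omega

lemma cube_adj_ne {d : ℕ} {u v : Finset (Fin d)} (h : (cube d).Adj u v) : u ≠ v :=
  (cube d).ne_of_adj h

lemma partner_odd {d : ℕ} {M : Set (Sym2 (Finset (Fin d)))} (hPM : IsPM (cube d) M)
    {f : OddVertex d ≃ EvenVertex d} (hf : Represents M f)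
    {a b : Finset (Fin d)} (hab : s(a, b) ∈ M) (ha : ¬ Even a.card) :
    ((f ⟨a, ha⟩ : EvenVertex d) : Finset (Fin d)) = b := by
  obtain ⟨e, -, huniq⟩ := hPM.2 a
  have h1 := huniq s(a, ((f ⟨a, ha⟩ : EvenVertex d) : Finset (Fin d)))
    ⟨hf ⟨a, ha⟩, Sym2.mem_mk_left _ _⟩
  have h2 := huniq s(a, b) ⟨hab, Sym2.mem_mk_left _ _⟩
  have h3 : s(a, ((f ⟨a, ha⟩ : EvenVertex d) : Finset (Fin d))) = s(a, b) := h1.trans h2.symm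
  rw [Sym2.eq_iff] at h3
  rcases h3 with ⟨-, h⟩ | ⟨h, -⟩
  · exact h
  · exfalso
    exact cube_adj_ne ((cube d).mem_edgeSet.1 (hPM.1 hab)) h

lemma partner_even {d : ℕ} {M : Set (Sym2 (Finset (Fin d)))} (hPM : IsPM (cube d) M)
    {f : OddVertex d ≃ EvenVertex d} (hf : Represents M f)
    {a b : Finset (Fin d)} (hab : s(a, b) ∈ M) (ha : Even a.card)
    (hb : ¬ Even b.card) :
    f ⟨b, hb⟩ = ⟨a, ha⟩ := by
  have : s(b, a) ∈ M := by rwa [Sym2.eq_swap]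
  exact Subtype.ext (partner_odd hPM hf this hb)

def flipEquiv {d : ℕ} (i : Fin d) : EvenVertex d ≃ OddVertex d where
  toFun x := ⟨symmDiff x.val {i}, by
    have := symmDiff_card_key x.val {i}
    have hx := x.2
    simp only [Finset.card_singleton] at this
    rw [Nat.even_iff] at hx ⊢
    omega⟩
  invFun y := ⟨symmDiff y.val {i}, by
    have := symmDiff_card_key y.val {i}
    have hy := y.2
    simp only [Finset.card_singleton] at this
    rw [Nat.even_iff] at hy ⊢
    omega⟩
  left_inv x := Subtype.ext (symmDiff_symmDiff_cancel_right _ _)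
  right_inv y := Subtype.ext (symmDiff_symmDiff_cancel_right _ _)

lemma even_card_evenVertex {d : ℕ} (hd : 2 ≤ d) : Even (Fintype.card (EvenVertex d)) := by
  have h1 : Fintype.card (EvenVertex d) = Fintype.card (OddVertex d) :=
    Fintype.card_congr (flipEquiv ⟨0, by omega⟩)
  have h2 : Fintype.card (OddVertex d)
      = Fintype.card (Finset (Fin d)) - Fintype.card (EvenVertex d) :=
    Fintype.card_subtype_compl _
  have h3 : Fintype.card (EvenVertex d) ≤ Fintype.card (Finset (Fin d)) :=
    Fintype.card_subtype_le _
  have h4 : Fintype.card (Finset (Fin d)) = 2 ^ d := by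
    rw [Fintype.card_finset, Fintype.card_fin]
  have h5 : 2 * Fintype.card (EvenVertex d) = 2 ^ d := by omega
  have h6 : 2 ^ d = 2 * (2 * 2 ^ (d - 2)) := by
    rw [← pow_succ', ← pow_succ']
    congr 1
    omega
  have h7 : Fintype.card (EvenVertex d) = 2 * 2 ^ (d - 2) := by omega
  exact ⟨2 ^ (d-2), by omega⟩

lemma cross_sign {d : ℕ} (hd : 4 ≤ d)
    {Mi Mj : Set (Sym2 (Finset (Fin d)))} (hMi : IsPM (cube d) Mi) (hMj : IsPM (cube d) Mj)
    (hdisj : Disjoint Mi Mj)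
    (hham : IsHamCycleSet (Mi ∪ Mj))
    {fi fj : OddVertex d ≃ EvenVertex d} (hfi : Represents Mi fi) (hfj : Represents Mj fj) :
    Equiv.Perm.sign (fj.symm.trans fi) = -1 := by
  classical
  set g : Equiv.Perm (EvenVertex d) := fj.symm.trans fi with hg
  -- no fixed points
  have hnofix : ∀ x : EvenVertex d, g x ≠ x := by
    intro x hx
    set y := fj.symm x with hy
    have h1 : s(y.val, x.val) ∈ Mj := by
      have := hfj y
      rwa [hy, Equiv.apply_symm_apply] at this
    have h2 : s(y.val, x.val) ∈ Mi := by
      have := hfi y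
      have hfix : fi y = x := hx
      rwa [hfix] at this
    exact Set.disjoint_left.1 hdisj h2 h1
  obtain ⟨v, w, hw, -⟩ := hham
  -- edges of the walk are cube edges
  have hedge : ∀ {a b : Finset (Fin d)}, (SimpleGraph.fromEdgeSet (Mi ∪ Mj)).Adj a b →
      s(a, b) ∈ Mi ∪ Mj ∧ (cube d).Adj a b := by
    intro a b hab
    rw [SimpleGraph.fromEdgeSet_adj] at hab
    refine ⟨hab.1, ?_⟩
    rcases hab.1 with h | h
    · exact (cube d).mem_edgeSet.1 (hMi.1 h)
    · exact (cube d).mem_edgeSet.1 (hMj.1 h)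
  -- the two-step lemma
  have step : ∀ k, k + 2 ≤ w.length → ∀ h : Even (w.getVert k).card,
      ∃ h2 : Even (w.getVert (k + 2)).card,
        g.SameCycle ⟨w.getVert k, h⟩ ⟨w.getVert (k + 2), h2⟩ := by
    intro k hk h
    have adj1 := w.adj_getVert_succ (i := k) (by omega)
    have adj2 := w.adj_getVert_succ (i := k + 1) (by omega)
    obtain ⟨e1mem, c1⟩ := hedge adj1
    obtain ⟨e2mem, c2⟩ := hedge adj2
    have hb : ¬ Even (w.getVert (k + 1)).card := (cube_adj_parity c1).1 h
    have h2 : Even (w.getVert (k + 1 + 1)).card := by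
      have := cube_adj_parity c2
      tauto
    rw [show k + 1 + 1 = k + 2 from rfl] at h2 c2 e2mem adj2
    refine ⟨h2, ?_⟩
    -- helper for the "same matching" case
    have same_case : ∀ (M : Set (Sym2 (Finset (Fin d)))), IsPM (cube d) M →
        s(w.getVert k, w.getVert (k+1)) ∈ M → s(w.getVert (k+1), w.getVert (k+2)) ∈ M →
        g.SameCycle ⟨w.getVert k, h⟩ ⟨w.getVert (k + 2), h2⟩ := by
      intro M hPM hm1 hm2
      obtain ⟨e, -, huniq⟩ := hPM.2 (w.getVert (k+1))
      have u1 := huniq s(w.getVert k, w.getVert (k+1)) ⟨hm1, Sym2.mem_mk_right _ _⟩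
      have u2 := huniq s(w.getVert (k+1), w.getVert (k+2)) ⟨hm2, Sym2.mem_mk_left _ _⟩
      have heq : s(w.getVert k, w.getVert (k+1)) = s(w.getVert (k+1), w.getVert (k+2)) :=
        u1.trans u2.symm
      rw [Sym2.eq_iff] at heq
      rcases heq with ⟨ha, -⟩ | ⟨hac, -⟩
      · exact absurd ha (cube_adj_ne c1)
      · have : (⟨w.getVert k, h⟩ : EvenVertex d) = ⟨w.getVert (k+2), h2⟩ := Subtype.ext hac
        rw [this]
    rcases e1mem with m1 | m1 <;> rcases e2mem with m2 | m2
    · exact same_case Mi hMi m1 m2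
    · -- e1 ∈ Mi, e2 ∈ Mj : g ⟨v_{k+2}⟩ = ⟨v_k⟩
      have p1 : fi ⟨w.getVert (k+1), hb⟩ = ⟨w.getVert k, h⟩ :=
        partner_even hMi hfi m1 h hb
      have p2 : fj ⟨w.getVert (k+1), hb⟩ = ⟨w.getVert (k+2), h2⟩ :=
        partner_even hMj hfj (by rwa [Sym2.eq_swap] at m2) h2 hb
      have : g ⟨w.getVert (k+2), h2⟩ = ⟨w.getVert k, h⟩ := by
        rw [hg]
        simp only [Equiv.trans_apply]
        rw [← p2, Equiv.symm_apply_apply, p1]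
      exact (Equiv.Perm.SameCycle.symm ⟨1, by simpa using this⟩)
    · -- e1 ∈ Mj, e2 ∈ Mi : g ⟨v_k⟩ = ⟨v_{k+2}⟩
      have p1 : fj ⟨w.getVert (k+1), hb⟩ = ⟨w.getVert k, h⟩ :=
        partner_even hMj hfj m1 h hb
      have p2 : fi ⟨w.getVert (k+1), hb⟩ = ⟨w.getVert (k+2), h2⟩ :=
        partner_even hMi hfi (by rwa [Sym2.eq_swap] at m2) h2 hb
      have : g ⟨w.getVert k, h⟩ = ⟨w.getVert (k+2), h2⟩ := by
        rw [hg]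
        simp only [Equiv.trans_apply]
        rw [← p1, Equiv.symm_apply_apply, p2]
      exact ⟨1, by simpa using this⟩
    · exact same_case Mj hMj m1 m2
  -- chains of steps
  have chain : ∀ m k, k + 2 * m ≤ w.length → ∀ h : Even (w.getVert k).card,
      ∃ h2 : Even (w.getVert (k + 2 * m)).card,
        g.SameCycle ⟨w.getVert k, h⟩ ⟨w.getVert (k + 2 * m), h2⟩ := by
    intro m
    induction m with
    | zero => intro k _ h; exact ⟨h, Equiv.Perm.SameCycle.refl _ _⟩
    | succ m ih =>
      intro k hk h
      have hrw : k + 2 * (m + 1) = (k + 2) + 2 * m := by ring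
      rw [hrw]
      obtain ⟨hs, scs⟩ := step k (by omega) h
      obtain ⟨h2, sc2⟩ := ih (k + 2) (by omega) hs
      exact ⟨h2, scs.trans sc2⟩
  -- position parity
  have posparity : ∀ k, k ≤ w.length →
      (Even (w.getVert k).card ↔ (Even k ↔ Even (w.getVert 0).card)) := by
    intro k
    induction k with
    | zero => intro _; simp
    | succ k ih =>
      intro hk
      have adj := w.adj_getVert_succ (i := k) (by omega)
      have hpar := cube_adj_parity (hedge adj).2
      have := ih (by omega)
      rw [Nat.even_add_one]
      tauto
  -- every even vertex is on the walk
  have onwalk : ∀ x : EvenVertex d, ∃ k, k ≤ w.length ∧ w.getVert k = x.val := by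
    intro x
    have := hw.mem_support x.val
    rw [Walk.mem_support_iff_exists_getVert] at this
    obtain ⟨n, h1, h2⟩ := this
    exact ⟨n, h2, h1⟩
  -- same cycle for ordered pairs
  have main_le : ∀ (k k' : ℕ), k ≤ k' → k' ≤ w.length →
      ∀ (h : Even (w.getVert k).card) (h' : Even (w.getVert k').card),
      g.SameCycle ⟨w.getVert k, h⟩ ⟨w.getVert k', h'⟩ := by
    intro k k' hkk' hk' h h'
    have p1 := (posparity k (by omega)).1 h
    have p2 := (posparity k' hk').1 h'
    have hiff : Even k ↔ Even k' := p1.trans p2.symm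
    have hev : Even (k' - k) := by
      rw [Nat.even_iff, Nat.even_iff] at hiff
      rw [Nat.even_iff]
      omega
    obtain ⟨m, hm⟩ := hev
    have hk'' : k' = k + 2 * m := by omega
    subst hk''
    obtain ⟨h2, sc⟩ := chain m k (by omega) h
    exact sc
  have main : ∀ x y : EvenVertex d, g.SameCycle x y := by
    intro x y
    obtain ⟨k, hk, hkx⟩ := onwalk x
    obtain ⟨k', hk', hky⟩ := onwalk y
    have hx : x = ⟨w.getVert k, hkx ▸ x.2⟩ := Subtype.ext hkx.symm
    have hy : y = ⟨w.getVert k', hky ▸ y.2⟩ := Subtype.ext hky.symm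
    rw [hx, hy]
    rcases le_total k k' with hle | hle
    · exact main_le k k' hle hk' _ _
    · exact (main_le k' k hle hk _ _).symm
  -- g is a cycle
  have hcycle : g.IsCycle := by
    refine ⟨⟨∅, by simp⟩, hnofix _, fun y _ => main _ y⟩
  have hsupp : g.support = Finset.univ := by
    ext x
    simp [Equiv.Perm.mem_support, hnofix x]
  have hcard : Even g.support.card := by
    rw [hsupp, Finset.card_univ]
    exact even_card_evenVertex (by omega)
  rw [hcycle.sign]
  rw [Even.neg_one_pow hcard]

lemma sign_symm_pair {d : ℕ} (fi fj : OddVertex d ≃ EvenVertex d) :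
    Equiv.Perm.sign (fi.symm.trans fj) = Equiv.Perm.sign (fj.symm.trans fi) := by
  have h : (fi.symm.trans fj) = (fj.symm.trans fi)⁻¹ := by
    ext x
    simp [Equiv.Perm.inv_def, Equiv.symm_trans_apply, Equiv.trans_apply, Equiv.symm_symm]
  rw [h, Equiv.Perm.sign_inv]

lemma sign_trans_mul {d : ℕ} (fi fk fj : OddVertex d ≃ EvenVertex d) :
    Equiv.Perm.sign (fj.symm.trans fi)
      = Equiv.Perm.sign (fk.symm.trans fi) * Equiv.Perm.sign (fj.symm.trans fk) := by
  have h : (fj.symm.trans fi) = (fk.symm.trans fi) * (fj.symm.trans fk) := by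
    ext x
    simp [Equiv.Perm.mul_apply, Equiv.trans_apply, Equiv.symm_apply_apply]
  rw [h, map_mul]

/-- For `l ∈ {1, 3}` and `d = 3 + l`, any 1-factorization of `Q_d` in which each of the
first three matchings forms a Hamilton cycle with each of the last `l` matchings has
sign `-1`. -/
theorem statement14 (l : ℕ) (hl : l = 1 ∨ l = 3)
    (M : Fin (3 + l) → Set (Sym2 (Finset (Fin (3 + l)))))
    (hM : IsFactorization (cube (3 + l)) M)
    (hham : ∀ i j : Fin (3 + l), (i : ℕ) < 3 → 3 ≤ (j : ℕ) →
      IsHamCycleSet (M i ∪ M j))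
    (f : Fin (3 + l) → (OddVertex (3 + l) ≃ EvenVertex (3 + l)))
    (hf : ∀ i, Represents (M i) (f i)) :
    factorizationSign f = -1 := by
  obtain ⟨hPM, hdisj, -⟩ := hM
  have hd : 4 ≤ 3 + l := by rcases hl with h | h <;> omega
  have key : ∀ i j : Fin (3 + l), (i : ℕ) < 3 → 3 ≤ (j : ℕ) →
      Equiv.Perm.sign ((f j).symm.trans (f i)) = -1 := by
    intro i j hi hj
    refine cross_sign hd (hPM i) (hPM j) (hdisj i j ?_) (hham i j hi hj) (hf i) (hf j)
    intro hij
    subst hij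
    omega
  have hval : ∀ p : Fin (3 + l) × Fin (3 + l), p.1 < p.2 →
      Equiv.Perm.sign ((f p.2).symm.trans (f p.1))
        = if ((p.1 : ℕ) < 3 ↔ (p.2 : ℕ) < 3) then 1 else -1 := by
    intro p hp
    rcases lt_or_ge (p.1 : ℕ) 3 with h1 | h1 <;> rcases lt_or_ge (p.2 : ℕ) 3 with h2 | h2
    · rw [if_pos (by tauto)]
      set j0 : Fin (3 + l) := ⟨3, by omega⟩ with hj0
      rw [sign_trans_mul (f p.1) (f j0) (f p.2)]
      rw [key p.1 j0 h1 le_rfl]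
      rw [sign_symm_pair (f p.2) (f j0)]
      rw [key p.2 j0 h2 le_rfl]
      norm_num
    · rw [if_neg (fun hc => absurd (hc.1 h1) (by omega))]
      exact key p.1 p.2 h1 h2
    · exact absurd (Fin.lt_iff_val_lt_val.1 hp) (by omega)
    · rw [if_pos (by constructor <;> (intro h; omega))]
      set k0 : Fin (3 + l) := ⟨0, by omega⟩ with hk0
      rw [sign_trans_mul (f p.1) (f k0) (f p.2)]
      rw [sign_symm_pair (f k0) (f p.1)]
      rw [key k0 p.1 (by simp [hk0]) h1]
      rw [key k0 p.2 (by simp [hk0]) h2]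
      norm_num
  unfold factorizationSign
  rw [Finset.prod_congr rfl (fun p hp => hval p ((Finset.mem_filter.1 hp).2))]
  rcases hl with h | h <;> subst h <;> decide
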